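/- For every real r, the two-mode squeezed vacuum covariance matrix V(r) satisfies the uncertainty relation: the complex Hermitian matrix V(r) − (i/2)Δ is positive semidefinite. -/

import Mathlib

open Matrix ComplexOrder

/-- Covariance matrix of the two-mode squeezed vacuum with squeezing parameter `r`. -/
noncomputable def Vtms (r : ℝ) : Matrix (Fin 4) (Fin 4) ℝ :=
  (1/2 : ℝ) • !![Real.cosh (2*r), 0, Real.sinh (2*r), 0;
                 0, Real.cosh (2*r), 0, -Real.sinh (2*r);
                 Real.sinh (2*r), 0, Real.cosh (2*r), 0;
                 0, -Real.sinh (2*r), 0, Real.cosh (2*r)]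

/-- The 4×4 symplectic form, block diagonal with blocks [[0,-1],[1,0]]. -/
def Δ4 : Matrix (Fin 4) (Fin 4) ℝ :=
  !![0,-1,0,0; 1,0,0,0; 0,0,0,-1; 0,0,1,0]

/-- Partial transposition of the second mode on covariance matrices. -/
def Λ4 : Matrix (Fin 4) (Fin 4) ℝ :=
  !![1,0,0,0; 0,1,0,0; 0,0,1,0; 0,0,0,-1]

/-- The complex Hermitian matrix `V - (i/2)Δ` built from a real 4×4 matrix `V`. -/
noncomputable def simonMatrix (V : Matrix (Fin 4) (Fin 4) ℝ) : Matrix (Fin 4) (Fin 4) ℂ :=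
  V.map (fun x => (x : ℂ)) - (Complex.I / 2) • Δ4.map (fun x => (x : ℂ))

/-- Auxiliary AM–GM-type inequality: if `E * F = 1` with `F ≥ 0`, then
`E u² + F v² ≥ 2 u v`. -/
lemma tmsv_aux (E F u v : ℝ) (hF : 0 ≤ F) (h : E*F = 1) : 0 ≤ E*u^2 + F*v^2 - 2*(u*v) := by
  have h2 : E*u^2 + F*v^2 - 2*(u*v) = F*(E*u-v)^2 := by
    linear_combination (2*u*v - E*u^2) * h
  rw [h2]; positivity

/-- Conjugate-transposition commutes with the real-to-complex entrywise map. -/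
lemma tmsv_mapRC_ct (A : Matrix (Fin 4) (Fin 4) ℝ) :
    (A.map (fun x => (x : ℂ)))ᴴ = Aᵀ.map (fun x => (x : ℂ)) := by
  ext i j; simp [Matrix.conjTranspose_apply, Matrix.map_apply, Complex.conj_ofReal]

set_option maxHeartbeats 1000000 in
theorem tmsv_uncertainty_relation (r : ℝ) :
    (simonMatrix (Vtms r)).PosSemidef := by
  have hV : (Vtms r)ᵀ = Vtms r := by
    ext i j; fin_cases i <;> fin_cases j <;> simp [Vtms, Matrix.vecHead, Matrix.vecTail]
  have hD : Δ4ᵀ = -Δ4 := by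
    ext i j; fin_cases i <;> fin_cases j <;> simp [Δ4, Matrix.vecHead, Matrix.vecTail]
  rw [posSemidef_iff_dotProduct_mulVec]
  constructor
  · unfold Matrix.IsHermitian simonMatrix
    rw [conjTranspose_sub, conjTranspose_smul, tmsv_mapRC_ct, tmsv_mapRC_ct, hV, hD]
    ext i j
    simp [Matrix.sub_apply, Matrix.smul_apply, Matrix.map_apply, Matrix.neg_apply]
    ring
  · intro x
    have hcr : (Complex.cosh (2 * (r:ℂ))).re = Real.cosh (2*r) := by
      rw [show (2*(r:ℂ)) = ((2*r:ℝ):ℂ) by push_cast; ring, Complex.cosh_ofReal_re]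
    have hci : (Complex.cosh (2 * (r:ℂ))).im = 0 := by
      rw [show (2*(r:ℂ)) = ((2*r:ℝ):ℂ) by push_cast; ring, Complex.cosh_ofReal_im]
    have hsr : (Complex.sinh (2 * (r:ℂ))).re = Real.sinh (2*r) := by
      rw [show (2*(r:ℂ)) = ((2*r:ℝ):ℂ) by push_cast; ring, Complex.sinh_ofReal_re]
    have hsi : (Complex.sinh (2 * (r:ℂ))).im = 0 := by
      rw [show (2*(r:ℂ)) = ((2*r:ℝ):ℂ) by push_cast; ring, Complex.sinh_ofReal_im]
    rw [Complex.le_def]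
    constructor
    · simp only [Complex.zero_re]
      simp [simonMatrix, Vtms, Δ4, dotProduct, mulVec, Fin.sum_univ_four,
        Matrix.vecHead, Matrix.vecTail, hcr, hci, hsr, hsi]
      set C := Real.cosh (2*r) with hC
      set S := Real.sinh (2*r) with hS
      have hE : C + S = Real.exp (2*r) := Real.cosh_add_sinh (2*r)
      have hF : C - S = Real.exp (-(2*r)) := Real.cosh_sub_sinh (2*r)
      have hEF : (C + S) * (C - S) = 1 := by
        rw [hE, hF, ← Real.exp_add]; simp
      have hFpos : (0:ℝ) ≤ C - S := by rw [hF]; positivity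
      have hEpos : (0:ℝ) ≤ C + S := by rw [hE]; positivity
      have hFE : (C - S) * (C + S) = 1 := by linarith [hEF]
      set a0 := (x 0).re; set b0 := (x 0).im
      set a1 := (x 1).re; set b1 := (x 1).im
      set a2 := (x 2).re; set b2 := (x 2).im
      set a3 := (x 3).re; set b3 := (x 3).im
      have t1 := tmsv_aux (C+S) (C-S) (a0+a2) (b1+b3) hFpos hEF
      have t2 := tmsv_aux (C+S) (C-S) (b0+b2) (-(a1+a3)) hFpos hEF
      have t3 := tmsv_aux (C-S) (C+S) (a0-a2) (b1-b3) hEpos hFE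
      have t4 := tmsv_aux (C-S) (C+S) (b0-b2) (a3-a1) hEpos hFE
      linarith [t1, t2, t3, t4]
    · simp only [Complex.zero_im]
      simp [simonMatrix, Vtms, Δ4, dotProduct, mulVec, Fin.sum_univ_four,
        Matrix.vecHead, Matrix.vecTail, hcr, hci, hsr, hsi]
      ring
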